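/- Given N functions κ_i of class K (continuous, strictly increasing, κ_i(0) = 0) and positive weights μ_i > 0, the function κ(r) := min{ Σ_{i=1}^N μ_i κ_i(s_i) : s_i ≥ 0, Σ_{i=1}^N μ_i s_i = r } is well-defined, satisfies κ(0) = 0, κ(r) > 0 for r > 0, and is nondecreasing. -/

import Mathlib

open scoped NNReal

/-- A function `γ : ℝ≥0 → ℝ≥0` is of class `K` if it is continuous, strictly
increasing, and vanishes at `0`. -/
def IsK (γ : ℝ≥0 → ℝ≥0) : Prop :=
  Continuous γ ∧ StrictMono γ ∧ γ 0 = 0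

/-- Given class-`K` functions `κ i` and positive weights `μ i`, the function
`κ(r) = min { Σ μ i * κ i (s i) : s i ≥ 0, Σ μ i * s i = r }` is well defined
(the minimum is attained), satisfies `κ 0 = 0`, `κ r > 0` for `r > 0`, and is
nondecreasing. -/
theorem stmt_4 {N : ℕ} (hN : 1 ≤ N) (κi : Fin N → ℝ≥0 → ℝ≥0)
    (hκi : ∀ i, IsK (κi i)) (μ : Fin N → ℝ≥0) (hμ : ∀ i, 0 < μ i) :
    ∃ κ : ℝ≥0 → ℝ≥0,
      (∀ r, IsLeast
        {t | ∃ s : Fin N → ℝ≥0, (∑ i, μ i * s i = r) ∧ (∑ i, μ i * κi i (s i) = t)}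
        (κ r)) ∧ κ 0 = 0 ∧ (∀ r, 0 < r → 0 < κ r) ∧ Monotone κ := by
  haveI : Nonempty (Fin N) := ⟨⟨0, hN⟩⟩
  set f : (Fin N → ℝ≥0) → ℝ≥0 := fun s => ∑ i, μ i * κi i (s i) with hf
  have hfc : Continuous f := by
    apply continuous_finset_sum
    intro i _
    exact continuous_const.mul ((hκi i).1.comp (continuous_apply i))
  have key : ∀ r : ℝ≥0, ∃ t, IsLeast
      {t | ∃ s : Fin N → ℝ≥0, (∑ i, μ i * s i = r) ∧ (∑ i, μ i * κi i (s i) = t)} t := by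
    intro r
    set K : Set (Fin N → ℝ≥0) := {s | ∑ i, μ i * s i = r} with hK
    have hKc : IsCompact K := by
      have hsub : K ⊆ {x | ∀ i, x i ∈ Set.Icc 0 (r / μ i)} := by
        intro s hs i
        constructor
        · exact zero_le
        · rw [le_div_iff₀ (hμ i), mul_comm]
          calc μ i * s i ≤ ∑ j, μ j * s j :=
                Finset.single_le_sum (f := fun j => μ j * s j) (fun j _ => zero_le)
                  (Finset.mem_univ i)
            _ = r := hs
      have hclosed : IsClosed K := by
        have : Continuous fun s : Fin N → ℝ≥0 => ∑ i, μ i * s i :=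
          continuous_finset_sum _ fun i _ => continuous_const.mul (continuous_apply i)
        exact isClosed_eq this continuous_const
      exact (isCompact_pi_infinite fun i => isCompact_Icc).of_isClosed_subset hclosed hsub
    have hKne : K.Nonempty := by
      refine ⟨fun i => if i = ⟨0, hN⟩ then r / μ ⟨0, hN⟩ else 0, ?_⟩
      show (∑ i, μ i * (if i = ⟨0, hN⟩ then r / μ ⟨0, hN⟩ else 0)) = r
      rw [Finset.sum_eq_single ⟨0, hN⟩]
      · simp [mul_div_cancel₀ _ (hμ ⟨0, hN⟩).ne']
      · intro j _ hj; simp [hj]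
      · simp
    have himg : {t | ∃ s : Fin N → ℝ≥0, (∑ i, μ i * s i = r) ∧ (∑ i, μ i * κi i (s i) = t)}
        = f '' K := by
      ext t; constructor
      · rintro ⟨s, h1, h2⟩; exact ⟨s, h1, h2⟩
      · rintro ⟨s, h1, h2⟩; exact ⟨s, h1, h2⟩
    rw [himg]
    exact (hKc.image hfc).exists_isLeast (hKne.image f)
  choose κ hκ using key
  refine ⟨κ, hκ, ?_, ?_, ?_⟩
  · -- κ 0 = 0
    have h0 : (0 : ℝ≥0) ∈ {t | ∃ s : Fin N → ℝ≥0,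
        (∑ i, μ i * s i = 0) ∧ (∑ i, μ i * κi i (s i) = t)} := by
      refine ⟨fun _ => 0, by simp, by simp [(hκi _).2.2]⟩
    exact le_antisymm ((hκ 0).2 h0) (zero_le)
  · -- positivity
    intro r hr
    obtain ⟨s, hs1, hs2⟩ := (hκ r).1
    have : ∃ i, 0 < s i := by
      by_contra h
      push_neg at h
      have : ∀ i, s i = 0 := fun i => le_antisymm (h i) (zero_le)
      apply hr.ne'
      rw [← hs1]
      simp [this]
    obtain ⟨i, hi⟩ := this
    rw [← hs2]
    have hpos : 0 < μ i * κi i (s i) := by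
      have : 0 < κi i (s i) := by
        have := (hκi i).2.1 hi
        rwa [(hκi i).2.2] at this
      exact mul_pos (hμ i) this
    calc (0 : ℝ≥0) < μ i * κi i (s i) := hpos
      _ ≤ ∑ j, μ j * κi j (s j) :=
        Finset.single_le_sum (f := fun j => μ j * κi j (s j)) (fun j _ => zero_le)
          (Finset.mem_univ i)
  · -- monotone
    intro r r' hrr'
    rcases eq_or_ne r' 0 with h0 | h0
    · have : r = 0 := le_antisymm (h0 ▸ hrr') (zero_le)
      simp [this, h0]
    obtain ⟨s', hs'1, hs'2⟩ := (hκ r').1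
    set c : ℝ≥0 := r / r' with hc
    have hc1 : c ≤ 1 := div_le_one_of_le₀ hrr' (zero_le)
    have hmem : (∑ i, μ i * (c * s' i)) = r := by
      have : ∑ i, μ i * (c * s' i) = c * ∑ i, μ i * s' i := by
        rw [Finset.mul_sum]; congr 1; ext i; ring
      rw [this, hs'1, hc, div_mul_cancel₀ _ h0]
    have hle : κ r ≤ ∑ i, μ i * κi i (c * s' i) :=
      (hκ r).2 ⟨fun i => c * s' i, hmem, rfl⟩
    refine hle.trans ?_
    rw [← hs'2]
    apply Finset.sum_le_sum
    intro i _
    exact mul_le_mul_right ((hκi i).2.1.monotone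
      (by calc c * s' i ≤ 1 * s' i := mul_le_mul_left hc1 _
            _ = s' i := one_mul _)) _
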